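/- Let m ≥ 1 and let q = (q_1, ..., q_m) be a probability distribution together with indices 0 ≤ k* ≤ j* ≤ m such that q_s ≤ 2/m for s = k*+1, ..., j* and q_s ≤ 3/(2m) for s = j*+1, ..., m. Let A_1 = Σ_{s=k*+1}^{j*} q_s, A_2 = Σ_{s=j*+1}^{m} q_s, A = A_1 + A_2, B = Σ_{s=1}^{k*} q_s·log₂(1/q_s), and assume A_2 ≥ A/2. Then H(q) ≥ B + A·log₂ m − (A/2)·log₂ 3, where H denotes Shannon entropy in bits. -/

import Mathlib

/-- Shannon entropy in bits of a finite vector. -/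
noncomputable def shannonH {m : ℕ} (w : Fin m → ℝ) : ℝ :=
  -∑ j, w j * Real.logb 2 (w j)

lemma term_bound (x c : ℝ) (hx : 0 ≤ x) (hxc : x ≤ c) :
    x * Real.logb 2 x ≤ x * Real.logb 2 c := by
  rcases eq_or_lt_of_le hx with h | h
  · simp [← h]
  · exact mul_le_mul_of_nonneg_left (Real.logb_le_logb_of_le one_lt_two h hxc) hx

/-- If the components of `q` with (1-based) indices in `(k*, j*]` are at
most `2/m` and those beyond `j*` at most `3/(2m)`, and `A₂ ≥ A/2`, then
`H(q) ≥ B + A log₂ m − (A/2) log₂ 3`. -/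
theorem entropy_lower_bound_greedy2
    (m : ℕ) (hm : 1 ≤ m) (q : Fin m → ℝ)
    (hqnn : ∀ j, 0 ≤ q j) (hqsum : ∑ j, q j = 1)
    (kstar jstar : ℕ) (hkj : kstar ≤ jstar) (hjm : jstar ≤ m)
    (hmid : ∀ j : Fin m, kstar ≤ j.val → j.val < jstar → q j ≤ 2 / (m : ℝ))
    (hsmall : ∀ j : Fin m, jstar ≤ j.val → q j ≤ 3 / (2 * (m : ℝ)))
    (A1 A2 A B : ℝ)
    (hA1 : A1 = ∑ j ∈ Finset.univ.filter
      (fun j : Fin m => kstar ≤ j.val ∧ j.val < jstar), q j)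
    (hA2 : A2 = ∑ j ∈ Finset.univ.filter (fun j : Fin m => jstar ≤ j.val), q j)
    (hAsum : A = A1 + A2) (hA2half : A2 ≥ A / 2)
    (hB : B = ∑ j ∈ Finset.univ.filter (fun j : Fin m => j.val < kstar),
      q j * Real.logb 2 (1 / q j)) :
    shannonH q ≥ B + A * Real.logb 2 (m : ℝ) - (A / 2) * Real.logb 2 3 := by
  have hm0 : (0:ℝ) < (m:ℝ) := by exact_mod_cast Nat.pos_of_ne_zero (by omega)
  set f : Fin m → ℝ := fun j => q j * Real.logb 2 (q j) with hf
  set S0 := Finset.univ.filter (fun j : Fin m => j.val < kstar) with hS0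
  set S1 := Finset.univ.filter (fun j : Fin m => kstar ≤ j.val ∧ j.val < jstar) with hS1
  set S2 := Finset.univ.filter (fun j : Fin m => jstar ≤ j.val) with hS2
  -- split the sum
  have hsplit : ∑ j, f j = (∑ j ∈ S0, f j) + (∑ j ∈ S1, f j) + (∑ j ∈ S2, f j) := by
    have h01 : Disjoint S0 S1 := by
      rw [Finset.disjoint_left]
      intro a ha hb
      simp only [hS0, hS1, Finset.mem_filter, Finset.mem_univ, true_and] at ha hb
      omega
    have h012 : Disjoint (S0 ∪ S1) S2 := by
      rw [Finset.disjoint_left]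
      intro a ha hb
      simp only [hS0, hS1, hS2, Finset.mem_union, Finset.mem_filter, Finset.mem_univ,
        true_and] at ha hb
      omega
    rw [← Finset.sum_union h01, ← Finset.sum_union h012]
    apply Finset.sum_congr _ (fun _ _ => rfl)
    ext j
    simp only [hS0, hS1, hS2, Finset.mem_union, Finset.mem_filter, Finset.mem_univ,
      true_and, true_iff, iff_true]
    omega
  -- B part
  have hBB : ∑ j ∈ S0, f j = -B := by
    rw [hB, ← Finset.sum_neg_distrib]
    apply Finset.sum_congr rfl
    intro j _
    rw [one_div, Real.logb_inv]
    ring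
  -- middle part
  have hS1bound : ∑ j ∈ S1, f j ≤ A1 * Real.logb 2 (2 / (m : ℝ)) := by
    rw [hA1, Finset.sum_mul]
    apply Finset.sum_le_sum
    intro j hj
    simp only [hS1, Finset.mem_filter] at hj
    exact term_bound _ _ (hqnn j) (hmid j hj.2.1 hj.2.2)
  -- tail part
  have hS2bound : ∑ j ∈ S2, f j ≤ A2 * Real.logb 2 (3 / (2 * (m : ℝ))) := by
    rw [hA2, Finset.sum_mul]
    apply Finset.sum_le_sum
    intro j hj
    simp only [hS2, Finset.mem_filter] at hj
    exact term_bound _ _ (hqnn j) (hsmall j hj.2)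
  have hA1nn : 0 ≤ A1 := by
    rw [hA1]; exact Finset.sum_nonneg fun j _ => hqnn j
  have hA2nn : 0 ≤ A2 := by
    rw [hA2]; exact Finset.sum_nonneg fun j _ => hqnn j
  have hlog2 : Real.logb 2 (2 / (m : ℝ)) = 1 - Real.logb 2 (m : ℝ) := by
    rw [Real.logb_div two_ne_zero (ne_of_gt hm0), Real.logb_self_eq_one one_lt_two]
  have hlog3 : Real.logb 2 (3 / (2 * (m : ℝ)))
      = Real.logb 2 3 - 1 - Real.logb 2 (m : ℝ) := by
    rw [Real.logb_div (by norm_num) (by positivity), Real.logb_mul two_ne_zero (ne_of_gt hm0),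
      Real.logb_self_eq_one one_lt_two]
    ring
  have hlog3le : Real.logb 2 3 ≤ 2 := by
    have : Real.logb 2 3 ≤ Real.logb 2 4 :=
      Real.logb_le_logb_of_le one_lt_two (by norm_num) (by norm_num)
    have h4 : Real.logb 2 (4:ℝ) = 2 := by
      rw [show (4:ℝ) = 2 ^ (2:ℕ) by norm_num, Real.logb_pow,
        Real.logb_self_eq_one one_lt_two]
      norm_num
    linarith
  have hd : A2 - A1 ≥ 0 := by rw [hAsum] at hA2half; linarith
  rw [shannonH, hsplit, hBB, hAsum]
  nlinarith [mul_nonneg hd ((by linarith : (0:ℝ) ≤ 2 - Real.logb 2 3))]
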